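/- Let Λ be a finitely generated abelian group of rank D, n ≥ 1, and R = (ZMod n)[Λ]. Let a ⊆ R be an ideal. If there exists a finite-index subgroup Γ ≤ Λ such that x^γ - 1 ∈ a for every γ ∈ Γ, then the quotient ring R/a is a finite ring. -/

import Mathlib

/-- Let `Λ` be a finitely generated abelian group, `n ≥ 1`, `R = (ZMod n)[Λ]`, and
`a ⊆ R` an ideal. If there is a finite-index subgroup `Γ ≤ Λ` with `x^γ - 1 ∈ a` for
all `γ ∈ Γ`, then `R/a` is a finite ring. -/
theorem stmt_19 (n : ℕ) [NeZero n] (Λ : Type*) [AddCommGroup Λ] [AddGroup.FG Λ]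
    (a : Ideal (AddMonoidAlgebra (ZMod n) Λ))
    (Γ : AddSubgroup Λ) (hΓ : Finite (Λ ⧸ Γ))
    (h : ∀ γ ∈ Γ, (AddMonoidAlgebra.single γ (1 : ZMod n)
      - (1 : AddMonoidAlgebra (ZMod n) Λ)) ∈ a) :
    Finite (AddMonoidAlgebra (ZMod n) Λ ⧸ a) := by
  set R := AddMonoidAlgebra (ZMod n) Λ
  let mk : R →+* R ⧸ a := Ideal.Quotient.mk a
  -- the generating set indexed by the finite quotient Λ ⧸ Γ
  let s : Set (R ⧸ a) := Set.range (fun c : Λ ⧸ Γ =>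
    mk (AddMonoidAlgebra.single (Quotient.out c) 1))
  -- key: the image of `single λ 1` only depends on `λ mod Γ`
  have key : ∀ lam : Λ, mk (AddMonoidAlgebra.single lam 1) ∈ Submodule.span (ZMod n) s := by
    intro lam
    set r : Λ := Quotient.out ((lam : Λ ⧸ Γ))
    have hr : lam - r ∈ Γ := by
      have : ((r : Λ ⧸ Γ)) = (lam : Λ ⧸ Γ) := QuotientAddGroup.out_eq' _
      exact (QuotientAddGroup.eq_iff_sub_mem).mp this.symm
    have heq : mk (AddMonoidAlgebra.single lam 1) = mk (AddMonoidAlgebra.single r 1) := by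
      rw [Ideal.Quotient.mk_eq_mk_iff_sub_mem]
      have : (AddMonoidAlgebra.single lam (1 : ZMod n)) - AddMonoidAlgebra.single r 1
          = AddMonoidAlgebra.single r 1 *
            (AddMonoidAlgebra.single (lam - r) (1 : ZMod n) - 1) := by
        rw [mul_sub, mul_one, AddMonoidAlgebra.single_mul_single, one_mul,
          add_sub_cancel]
      rw [this]
      exact Ideal.mul_mem_left a _ (h _ hr)
    rw [heq]
    exact Submodule.subset_span ⟨(lam : Λ ⧸ Γ), rfl⟩
  have hspan : Submodule.span (ZMod n) s = ⊤ := by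
    rw [eq_top_iff]
    rintro x -
    obtain ⟨f, rfl⟩ := Ideal.Quotient.mk_surjective x
    induction f using AddMonoidAlgebra.induction_on with
    | of g => simpa [AddMonoidAlgebra.of_apply] using key g
    | add f g hf hg => rw [map_add]; exact Submodule.add_mem _ hf hg
    | smul r f hf =>
      have : mk (r • f) = r • mk f := map_smul (Ideal.Quotient.mkₐ (ZMod n) a) r f
      rw [this]; exact Submodule.smul_mem _ _ hf
  have : Module.Finite (ZMod n) (R ⧸ a) := by
    have hs : s.Finite := Set.finite_range _
    refine ⟨⟨hs.toFinset, ?_⟩⟩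
    rwa [Set.Finite.coe_toFinset]
  haveI : Finite (ZMod n) := Finite.of_fintype _
  exact Module.finite_of_finite (ZMod n)
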